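/- Let μ be a finite signed measure on the Borel σ-algebra of [0,1] with total variation M = |μ|([0,1]), and let f : [0,1] → ℝ be continuously differentiable. Then ( ∫_{[0,1]} f(z) μ(dz) )² ≤ M² · (tanh 1)⁻¹ · ( ∫₀¹ f(x)² dx + ∫₀¹ f'(x)² dx ). -/

import Mathlib

open MeasureTheory

private lemma hasDerivAt_tanh (x : ℝ) :
    HasDerivAt Real.tanh (1 - Real.tanh x ^ 2) x := by
  have h : HasDerivAt (fun y => Real.sinh y / Real.cosh y)
      ((Real.cosh x * Real.cosh x - Real.sinh x * Real.sinh x) / Real.cosh x ^ 2) x :=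
    (Real.hasDerivAt_sinh x).div (Real.hasDerivAt_cosh x) (Real.cosh_pos x).ne'
  have heq : (fun y => Real.sinh y / Real.cosh y) = Real.tanh := by
    funext y; rw [Real.tanh_eq_sinh_div_cosh]
  have hval : (Real.cosh x * Real.cosh x - Real.sinh x * Real.sinh x) / Real.cosh x ^ 2
      = 1 - Real.tanh x ^ 2 := by
    rw [Real.tanh_eq_sinh_div_cosh]
    have hc := (Real.cosh_pos x).ne'
    field_simp
  rw [heq, hval] at h
  exact h

private lemma continuous_tanh : Continuous Real.tanh := by
  have : Real.tanh = fun y => Real.sinh y / Real.cosh y := by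
    funext y; rw [Real.tanh_eq_sinh_div_cosh]
  rw [this]
  exact Real.continuous_sinh.div Real.continuous_cosh fun x => (Real.cosh_pos x).ne'

private lemma tanh_nonneg {x : ℝ} (hx : 0 ≤ x) : 0 ≤ Real.tanh x := by
  rw [Real.tanh_eq_sinh_div_cosh]
  exact div_nonneg (Real.sinh_nonneg_iff.2 hx) (Real.cosh_pos x).le

private lemma tanh_subadd {a b : ℝ} (ha : 0 ≤ a) (hb : 0 ≤ b) :
    Real.tanh (a + b) ≤ Real.tanh a + Real.tanh b := by
  have hca := Real.cosh_pos a
  have hcb := Real.cosh_pos b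
  have hsum : Real.tanh a + Real.tanh b
      = Real.sinh (a + b) / (Real.cosh a * Real.cosh b) := by
    rw [Real.tanh_eq_sinh_div_cosh, Real.tanh_eq_sinh_div_cosh, Real.sinh_add]
    field_simp
  rw [hsum, Real.tanh_eq_sinh_div_cosh]
  have hs : 0 ≤ Real.sinh (a + b) := Real.sinh_nonneg_iff.2 (by linarith)
  have hden : Real.cosh a * Real.cosh b ≤ Real.cosh (a + b) := by
    rw [Real.cosh_add]
    nlinarith [Real.sinh_nonneg_iff.2 ha, Real.sinh_nonneg_iff.2 hb]
  exact div_le_div_of_nonneg_left hs (by positivity) hden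

private lemma key_sobolev (f f' : ℝ → ℝ)
    (hf : ∀ x ∈ Set.Icc (0:ℝ) 1, HasDerivWithinAt f (f' x) (Set.Icc 0 1) x)
    (hf' : ContinuousOn f' (Set.Icc 0 1)) {x : ℝ} (hx : x ∈ Set.Icc (0:ℝ) 1) :
    f x ^ 2 * Real.tanh 1 ≤ ∫ t in (0:ℝ)..1, (f t ^ 2 + f' t ^ 2) := by
  have hfc : ContinuousOn f (Set.Icc 0 1) := fun y hy => (hf y hy).continuousWithinAt
  have hfd : ∀ y ∈ Set.Ioo (0:ℝ) 1, HasDerivAt f (f' y) y := fun y hy =>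
    (hf y (Set.Ioo_subset_Icc_self hy)).hasDerivAt (Icc_mem_nhds hy.1 hy.2)
  -- the combined integrand
  have hcont_sum : ContinuousOn (fun t => f t ^ 2 + f' t ^ 2) (Set.Icc 0 1) :=
    (hfc.pow 2).add (hf'.pow 2)
  have hint01 : IntervalIntegrable (fun t => f t ^ 2 + f' t ^ 2) volume 0 1 :=
    hcont_sum.intervalIntegrable_of_Icc (by norm_num)
  have hsub1 : Set.Icc (0:ℝ) x ⊆ Set.Icc 0 1 := Set.Icc_subset_Icc le_rfl hx.2
  have hsub2 : Set.Icc x (1:ℝ) ⊆ Set.Icc 0 1 := Set.Icc_subset_Icc hx.1 le_rfl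
  have hintL : IntervalIntegrable (fun t => f t ^ 2 + f' t ^ 2) volume 0 x :=
    (hcont_sum.mono hsub1).intervalIntegrable_of_Icc hx.1
  have hintR : IntervalIntegrable (fun t => f t ^ 2 + f' t ^ 2) volume x 1 :=
    (hcont_sum.mono hsub2).intervalIntegrable_of_Icc hx.2
  -- first part: on [0, x]
  set G1 : ℝ → ℝ := fun t => f t ^ 2 * Real.tanh t with hG1def
  set G1' : ℝ → ℝ := fun t =>
    2 * f t * f' t * Real.tanh t + f t ^ 2 * (1 - Real.tanh t ^ 2) with hG1'def
  have hG1cont : ContinuousOn G1 (Set.Icc 0 x) :=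
    ((hfc.mono hsub1).pow 2).mul (continuous_tanh.continuousOn)
  have hG1deriv : ∀ y ∈ Set.Ioo (0:ℝ) x, HasDerivWithinAt G1 (G1' y) (Set.Ioi y) y := by
    intro y hy
    have hy' : y ∈ Set.Ioo (0:ℝ) 1 := ⟨hy.1, lt_of_lt_of_le hy.2 hx.2⟩
    have h1 : HasDerivAt (fun t => f t ^ 2) (2 * f y * f' y) y := by
      have := (hfd y hy').fun_pow 2
      exact this.congr_deriv (by push_cast; ring)
    have := h1.mul (hasDerivAt_tanh y)
    exact (this.congr_deriv (by simp only [hG1'def])).hasDerivWithinAt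
  have hG1'cont : ContinuousOn G1' (Set.Icc 0 x) := by
    apply ContinuousOn.add
    · exact ((continuous_const.continuousOn.mul (hfc.mono hsub1)).mul
        (hf'.mono hsub1)).mul continuous_tanh.continuousOn
    · exact ((hfc.mono hsub1).pow 2).mul
        (continuous_const.continuousOn.sub (continuous_tanh.continuousOn.pow 2))
  have hG1'int : IntervalIntegrable G1' volume 0 x :=
    hG1'cont.intervalIntegrable_of_Icc hx.1
  have hftc1 : ∫ t in (0:ℝ)..x, G1' t = f x ^ 2 * Real.tanh x := by
    rw [intervalIntegral.integral_eq_sub_of_hasDeriv_right_of_le hx.1 hG1cont hG1deriv hG1'int]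
    have : Real.tanh 0 = 0 := by
      rw [Real.tanh_eq_sinh_div_cosh]; simp
    simp [hG1def, this]
  have hle1 : f x ^ 2 * Real.tanh x ≤ ∫ t in (0:ℝ)..x, (f t ^ 2 + f' t ^ 2) := by
    rw [← hftc1]
    apply intervalIntegral.integral_mono_on hx.1 hG1'int hintL
    intro t _
    simp only [hG1'def]
    nlinarith [sq_nonneg (f' t - f t * Real.tanh t)]
  -- second part: on [x, 1]
  set G2 : ℝ → ℝ := fun t => -(f t ^ 2 * Real.tanh (1 - t)) with hG2def
  set G2' : ℝ → ℝ := fun t =>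
    -(2 * f t * f' t * Real.tanh (1 - t)) + f t ^ 2 * (1 - Real.tanh (1 - t) ^ 2) with hG2'def
  have htc : Continuous fun t : ℝ => Real.tanh (1 - t) :=
    continuous_tanh.comp (continuous_const.sub continuous_id)
  have hG2cont : ContinuousOn G2 (Set.Icc x 1) :=
    (((hfc.mono hsub2).pow 2).mul htc.continuousOn).neg
  have hG2deriv : ∀ y ∈ Set.Ioo x (1:ℝ), HasDerivWithinAt G2 (G2' y) (Set.Ioi y) y := by
    intro y hy
    have hy' : y ∈ Set.Ioo (0:ℝ) 1 := ⟨lt_of_le_of_lt hx.1 hy.1, hy.2⟩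
    have h1 : HasDerivAt (fun t => f t ^ 2) (2 * f y * f' y) y := by
      have := (hfd y hy').fun_pow 2
      exact this.congr_deriv (by push_cast; ring)
    have h2 : HasDerivAt (fun t : ℝ => Real.tanh (1 - t))
        ((1 - Real.tanh (1 - y) ^ 2) * (-1)) y :=
      (hasDerivAt_tanh (1 - y)).comp y ((hasDerivAt_id y).const_sub 1)
    have := (h1.mul h2).neg
    exact (this.congr_deriv (by simp only [hG2'def]; ring)).hasDerivWithinAt
  have hG2'cont : ContinuousOn G2' (Set.Icc x 1) := by
    apply ContinuousOn.add
    · exact (((continuous_const.continuousOn.mul (hfc.mono hsub2)).mul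
        (hf'.mono hsub2)).mul htc.continuousOn).neg
    · exact ((hfc.mono hsub2).pow 2).mul
        (continuous_const.continuousOn.sub (htc.continuousOn.pow 2))
  have hG2'int : IntervalIntegrable G2' volume x 1 :=
    hG2'cont.intervalIntegrable_of_Icc hx.2
  have hftc2 : ∫ t in x..(1:ℝ), G2' t = f x ^ 2 * Real.tanh (1 - x) := by
    rw [intervalIntegral.integral_eq_sub_of_hasDeriv_right_of_le hx.2 hG2cont hG2deriv hG2'int]
    have : Real.tanh 0 = 0 := by
      rw [Real.tanh_eq_sinh_div_cosh]; simp
    simp [hG2def, this]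
  have hle2 : f x ^ 2 * Real.tanh (1 - x) ≤ ∫ t in x..(1:ℝ), (f t ^ 2 + f' t ^ 2) := by
    rw [← hftc2]
    apply intervalIntegral.integral_mono_on hx.2 hG2'int hintR
    intro t _
    simp only [hG2'def]
    nlinarith [sq_nonneg (f' t + f t * Real.tanh (1 - t))]
  -- combine
  have hsplit : (∫ t in (0:ℝ)..x, (f t ^ 2 + f' t ^ 2))
      + ∫ t in x..(1:ℝ), (f t ^ 2 + f' t ^ 2)
      = ∫ t in (0:ℝ)..1, (f t ^ 2 + f' t ^ 2) :=
    intervalIntegral.integral_add_adjacent_intervals hintL hintR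
  have hsub : Real.tanh 1 ≤ Real.tanh x + Real.tanh (1 - x) := by
    have := tanh_subadd hx.1 (by linarith [hx.2] : (0:ℝ) ≤ 1 - x)
    simpa using this
  have : f x ^ 2 * Real.tanh 1 ≤ f x ^ 2 * (Real.tanh x + Real.tanh (1 - x)) :=
    mul_le_mul_of_nonneg_left hsub (sq_nonneg _)
  calc f x ^ 2 * Real.tanh 1 ≤ f x ^ 2 * (Real.tanh x + Real.tanh (1 - x)) := this
    _ = f x ^ 2 * Real.tanh x + f x ^ 2 * Real.tanh (1 - x) := by ring
    _ ≤ (∫ t in (0:ℝ)..x, (f t ^ 2 + f' t ^ 2)) + ∫ t in x..(1:ℝ), (f t ^ 2 + f' t ^ 2) :=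
        add_le_add hle1 hle2
    _ = ∫ t in (0:ℝ)..1, (f t ^ 2 + f' t ^ 2) := hsplit

/-- For a finite signed measure `μ` on the Borel σ-algebra of `[0,1]`
with total variation `M = |μ|([0,1])` and a continuously differentiable `f : [0,1] → ℝ`,
`(∫_{[0,1]} f dμ)² ≤ M² (tanh 1)⁻¹ (∫₀¹ f² + ∫₀¹ f'²)`.
The integral of `f` against `μ` is expressed through the Jordan decomposition. -/
theorem stmt_2 (μ : MeasureTheory.SignedMeasure ℝ)
    (hμ : ∀ s : Set ℝ, MeasurableSet s → μ s = μ (s ∩ Set.Icc 0 1))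
    (M : ℝ) (hM : M = (μ.totalVariation (Set.Icc 0 1)).toReal)
    (f f' : ℝ → ℝ)
    (hf : ∀ x ∈ Set.Icc (0:ℝ) 1, HasDerivWithinAt f (f' x) (Set.Icc 0 1) x)
    (hf' : ContinuousOn f' (Set.Icc 0 1)) :
    ((∫ z in Set.Icc (0:ℝ) 1, f z ∂μ.toJordanDecomposition.posPart)
        - ∫ z in Set.Icc (0:ℝ) 1, f z ∂μ.toJordanDecomposition.negPart) ^ 2
      ≤ M ^ 2 * (Real.tanh 1)⁻¹ *
        ((∫ x in Set.Icc (0:ℝ) 1, f x ^ 2) + ∫ x in Set.Icc (0:ℝ) 1, f' x ^ 2) := by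
  have hfc : ContinuousOn f (Set.Icc 0 1) := fun y hy => (hf y hy).continuousWithinAt
  have htanh1 : 0 < Real.tanh 1 := by
    rw [Real.tanh_eq_sinh_div_cosh]
    exact div_pos (Real.sinh_pos_iff.2 one_pos) (Real.cosh_pos 1)
  -- rewrite RHS integrals as interval integral
  have hif : IntervalIntegrable (fun t => f t ^ 2) volume 0 1 :=
    (hfc.pow 2).intervalIntegrable_of_Icc (by norm_num)
  have hif' : IntervalIntegrable (fun t => f' t ^ 2) volume 0 1 :=
    (hf'.pow 2).intervalIntegrable_of_Icc (by norm_num)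
  set I : ℝ := (∫ x in Set.Icc (0:ℝ) 1, f x ^ 2) + ∫ x in Set.Icc (0:ℝ) 1, f' x ^ 2 with hIdef
  have hIeq : (∫ t in (0:ℝ)..1, (f t ^ 2 + f' t ^ 2)) = I := by
    rw [intervalIntegral.integral_add hif hif', hIdef,
      intervalIntegral.integral_of_le (by norm_num : (0:ℝ) ≤ 1),
      intervalIntegral.integral_of_le (by norm_num : (0:ℝ) ≤ 1),
      MeasureTheory.integral_Icc_eq_integral_Ioc, MeasureTheory.integral_Icc_eq_integral_Ioc]
  have hkey : ∀ x ∈ Set.Icc (0:ℝ) 1, f x ^ 2 ≤ (Real.tanh 1)⁻¹ * I := by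
    intro x hx
    have h := (key_sobolev f f' hf hf' hx).trans_eq hIeq
    have := (le_div_iff₀ htanh1).mpr h
    rwa [div_eq_inv_mul] at this
  set K : ℝ := (Real.tanh 1)⁻¹ * I with hKdef
  have hK0 : 0 ≤ K := le_trans (sq_nonneg (f 0)) (hkey 0 (by norm_num))
  set C : ℝ := Real.sqrt K with hCdef
  have hC2 : C ^ 2 = K := Real.sq_sqrt hK0
  have hbound : ∀ x ∈ Set.Icc (0:ℝ) 1, ‖f x‖ ≤ C := by
    intro x hx
    rw [Real.norm_eq_abs, ← Real.sqrt_sq_eq_abs]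
    exact Real.sqrt_le_sqrt (hkey x hx)
  set P : ℝ := (μ.toJordanDecomposition.posPart (Set.Icc 0 1)).toReal with hPdef
  set N : ℝ := (μ.toJordanDecomposition.negPart (Set.Icc 0 1)).toReal with hNdef
  have hPfin : μ.toJordanDecomposition.posPart (Set.Icc (0:ℝ) 1) < ⊤ :=
    measure_lt_top _ _
  have hNfin : μ.toJordanDecomposition.negPart (Set.Icc (0:ℝ) 1) < ⊤ :=
    measure_lt_top _ _
  have hA : ‖∫ z in Set.Icc (0:ℝ) 1, f z ∂μ.toJordanDecomposition.posPart‖ ≤ C * P :=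
    norm_setIntegral_le_of_norm_le_const hPfin hbound
  have hB : ‖∫ z in Set.Icc (0:ℝ) 1, f z ∂μ.toJordanDecomposition.negPart‖ ≤ C * N :=
    norm_setIntegral_le_of_norm_le_const hNfin hbound
  have hMeq : M = P + N := by
    rw [hM, MeasureTheory.SignedMeasure.totalVariation, Measure.add_apply,
      ENNReal.toReal_add hPfin.ne hNfin.ne]
  set A : ℝ := ∫ z in Set.Icc (0:ℝ) 1, f z ∂μ.toJordanDecomposition.posPart with hAdef
  set B : ℝ := ∫ z in Set.Icc (0:ℝ) 1, f z ∂μ.toJordanDecomposition.negPart with hBdef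
  have habs : |A - B| ≤ C * (P + N) := by
    calc |A - B| ≤ |A| + |B| := abs_sub _ _
      _ ≤ C * P + C * N := add_le_add hA hB
      _ = C * (P + N) := by ring
  have hsq : (A - B) ^ 2 ≤ (C * (P + N)) ^ 2 := by
    rw [← sq_abs (A - B)]
    exact pow_le_pow_left₀ (abs_nonneg _) habs 2
  calc (A - B) ^ 2 ≤ (C * (P + N)) ^ 2 := hsq
    _ = C ^ 2 * (P + N) ^ 2 := by ring
    _ = K * M ^ 2 := by rw [hC2, hMeq]
    _ = M ^ 2 * (Real.tanh 1)⁻¹ * I := by rw [hKdef]; ring
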